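/- Every maximal anti-clique in $\mathbb{R}^n$ (with the Euclidean metric and farness relation $d(x,y) > 1$) is a convex set. -/
import Mathlib


/-- An anti-clique in Euclidean space for the farness relation. -/
def AntiCliqueE {n : ℕ} (M : Set (EuclideanSpace ℝ (Fin n))) : Prop :=
  ∀ x ∈ M, ∀ y ∈ M, dist x y ≤ 1

theorem stmt_2 {n : ℕ} (M : Set (EuclideanSpace ℝ (Fin n)))
    (hM : AntiCliqueE M)
    (hmax : ∀ M' : Set (EuclideanSpace ℝ (Fin n)), AntiCliqueE M' → M ⊆ M' → M' = M) :
    Convex ℝ M := by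
  intro x hx y hy a b ha hb hab
  set z := a • x + b • y with hz
  -- every point of M is within 1 of z
  have key : ∀ m ∈ M, dist z m ≤ 1 := by
    intro m hm
    have hxb : x ∈ Metric.closedBall m 1 := by
      simpa [Metric.mem_closedBall, dist_comm] using hM x hx m hm
    have hyb : y ∈ Metric.closedBall m 1 := by
      simpa [Metric.mem_closedBall, dist_comm] using hM y hy m hm
    have := (convex_closedBall m (1:ℝ)) hxb hyb ha hb hab
    simpa [Metric.mem_closedBall] using this
  have hM' : AntiCliqueE (insert z M) := by
    intro p hp q hq
    rcases hp with rfl | hp <;> rcases hq with rfl | hq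
    · simp
    · exact key q hq
    · simpa [dist_comm] using key p hp
    · exact hM p hp q hq
  have := hmax (insert z M) hM' (Set.subset_insert z M)
  have : z ∈ M := this ▸ Set.mem_insert z M
  exact this
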